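/- Positivity constraints on the blocks of a generalized one-particle density matrix: let γ, α, δ ∈ M_d(ℂ) and form the block matrix M := fromBlocks γ α αᴴ δ ∈ M_{2d}(ℂ). If both M and 1 − M are positive semidefinite, then γ − γ² − α·αᴴ is positive semidefinite; in particular, Re Tr(α·αᴴ) ≤ Re Tr(γ − γ²), i.e., the Hilbert–Schmidt norm squared of the pairing block α is bounded by the trace of γ − γ². -/

import Mathlib

open Matrix
open scoped ComplexOrder

lemma psd_trace_nonneg {n : ℕ} {A : Matrix (Fin n) (Fin n) ℂ} (hA : A.PosSemidef) :
    0 ≤ A.trace := by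
  rw [Matrix.trace]
  apply Finset.sum_nonneg
  intro i _
  exact hA.diag_nonneg

/-- **Positivity constraints on the blocks of a generalized one-particle density matrix**:
if `M = [[γ, α], [αᴴ, δ]]` satisfies `0 ⪯ M ⪯ 1`, then `γ − γ² − α αᴴ ⪰ 0`; in particular
`Re Tr(α αᴴ) ≤ Re Tr(γ − γ²)`. -/
theorem gpdm_block_positivity (d : ℕ) (γ α δ : Matrix (Fin d) (Fin d) ℂ)
    (hM : (Matrix.fromBlocks γ α αᴴ δ).PosSemidef)
    (hM1 : ((1 : Matrix (Fin d ⊕ Fin d) (Fin d ⊕ Fin d) ℂ)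
        - Matrix.fromBlocks γ α αᴴ δ).PosSemidef) :
    (γ - γ * γ - α * αᴴ).PosSemidef ∧
      ((α * αᴴ).trace).re ≤ ((γ - γ * γ).trace).re := by
  set M := Matrix.fromBlocks γ α αᴴ δ with hMdef
  obtain ⟨S, hSH, hsq⟩ : ∃ S : Matrix (Fin d ⊕ Fin d) (Fin d ⊕ Fin d) ℂ,
      S.IsHermitian ∧ S * S = M :=
    open scoped MatrixOrder in
    ⟨CFC.sqrt M, (CFC.sqrt_nonneg M).posSemidef.1, CFC.sqrt_mul_sqrt_self M hM.nonneg⟩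
  have hkey : (M - M * M).PosSemidef := by
    have h1 : (S * (1 - M) * Sᴴ).PosSemidef :=
      hM1.mul_mul_conjTranspose_same _
    have h2 : S * (1 - M) * Sᴴ = M - M * M := by
      rw [hSH]
      rw [Matrix.mul_sub, Matrix.mul_one, Matrix.sub_mul, hsq]
      congr 1
      calc S * M * S = S * (S * S) * S := by rw [hsq]
        _ = (S * S) * (S * S) := by simp only [Matrix.mul_assoc]
        _ = M * M := by rw [hsq]
    rwa [h2] at h1
  have hblock : ((M - M * M).submatrix Sum.inl Sum.inl) = γ - γ * γ - α * αᴴ := by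
    rw [hMdef, Matrix.fromBlocks_multiply]
    ext i j
    simp [Matrix.fromBlocks, Matrix.sub_apply, Matrix.add_apply]
    ring
  have hγ : (γ - γ * γ - α * αᴴ).PosSemidef := by
    rw [← hblock]; exact hkey.submatrix _
  refine ⟨hγ, ?_⟩
  have := psd_trace_nonneg hγ
  have htr : (γ - γ * γ - α * αᴴ).trace = (γ - γ * γ).trace - (α * αᴴ).trace := by
    simp [Matrix.trace_sub]
  rw [htr] at this
  have := this.1
  simp [Complex.sub_re] at this ⊢
  linarith
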